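/- A Pauli operator P = ∏_{u ∈ A} X_u · ∏_{v ∈ B} Z_v (with A, B ⊆ V) stabilizes the graph state E_G |+⟩^{⊗V} up to sign if and only if B = Odd(A); i.e. P |G⟩ = ± |G⟩ implies B = Odd(A), and conversely B = Odd(A) implies P |G⟩ = ± |G⟩. -/

import Mathlib

open Finset

variable {V : Type*} [Fintype V] [DecidableEq V]

/-- The diagonal coefficient of `E_G = ∏_{(i,j) ∈ E(G)} CZ_{ij}` on the computational
basis state `x : V → Fin 2`: a factor `−1` for every edge both of whose endpoints are
in state `|1⟩`. -/
noncomputable def egCoef (G : SimpleGraph V) [DecidableRel G.Adj] (x : V → Fin 2) : ℂ :=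
  ∏ e ∈ G.edgeFinset,
    Sym2.lift ⟨fun i j => if x i = 1 ∧ x j = 1 then (-1 : ℂ) else 1,
      fun i j => by by_cases h : x i = 1 <;> by_cases h' : x j = 1 <;> simp [h, h']⟩ e

/-- The entangling operator `E_G` acting on states (functions on the computational basis). -/
noncomputable def egOp (G : SimpleGraph V) [DecidableRel G.Adj]
    (ψ : (V → Fin 2) → ℂ) : (V → Fin 2) → ℂ :=
  fun x => egCoef G x * ψ x

/-- `∏_{v ∈ S} Z_v` acting on states. -/
noncomputable def zOp (S : Finset V) (ψ : (V → Fin 2) → ℂ) : (V → Fin 2) → ℂ :=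
  fun x => (-1 : ℂ) ^ (S.filter fun v => x v = 1).card * ψ x

/-- Bit flip on the set `S`. -/
def flipS (S : Finset V) (x : V → Fin 2) : V → Fin 2 :=
  fun v => if v ∈ S then x v + 1 else x v

/-- `∏_{v ∈ S} X_v` acting on states. -/
def xOp (S : Finset V) (ψ : (V → Fin 2) → ℂ) : (V → Fin 2) → ℂ :=
  fun x => ψ (flipS S x)

/-- The state `|+⟩^{⊗V}`. -/
noncomputable def plusState : (V → Fin 2) → ℂ :=
  fun _ => ((Real.sqrt 2 : ℂ))⁻¹ ^ Fintype.card V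
/-- The odd neighborhood `Odd(A) = {v : |N_G(v) ∩ A| is odd}`. -/
def oddNbhd (G : SimpleGraph V) [DecidableRel G.Adj] (K : Finset V) : Finset V :=
  Finset.univ.filter fun u => (G.neighborFinset u ∩ K).card % 2 = 1

/-! ### Auxiliary machinery -/

open Fin.CommRing

noncomputable def chi (a : Fin 2) : ℂ := if a = 1 then -1 else 1

lemma chi_zero : chi 0 = 1 := by norm_num [chi]

lemma chi_add (a b : Fin 2) : chi (a + b) = chi a * chi b := by
  fin_cases a <;> fin_cases b <;> norm_num [chi, Fin.ext_iff] <;> decide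

lemma chi_mul_self (a : Fin 2) : chi a * chi a = 1 := by
  fin_cases a <;> norm_num [chi]

lemma chi_inj {a b : Fin 2} (h : chi a = chi b) : a = b := by
  fin_cases a <;> fin_cases b <;> simp_all [chi] <;> norm_num at h

lemma chi_sum {ι : Type*} (s : Finset ι) (f : ι → Fin 2) :
    chi (∑ i ∈ s, f i) = ∏ i ∈ s, chi (f i) := by
  classical
  induction s using Finset.cons_induction with
  | empty => simp [chi_zero]
  | cons a s ha ih => rw [Finset.sum_cons, Finset.prod_cons, chi_add, ih]

lemma fin2_cases (a : Fin 2) : a = 0 ∨ a = 1 := by omega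

/-- quadratic form -/
def Qf (G : SimpleGraph V) [DecidableRel G.Adj] (x : V → Fin 2) : Fin 2 :=
  ∑ e ∈ G.edgeFinset, Sym2.lift ⟨fun i j => x i * x j, fun i j => mul_comm _ _⟩ e

lemma egCoef_eq_chi (G : SimpleGraph V) [DecidableRel G.Adj] (x : V → Fin 2) :
    egCoef G x = chi (Qf G x) := by
  rw [egCoef, Qf, chi_sum]
  refine Finset.prod_congr rfl fun e _ => ?_
  induction e using Sym2.ind with
  | _ i j =>
    simp only [Sym2.lift_mk]
    rcases fin2_cases (x i) with h1 | h1 <;> rcases fin2_cases (x j) with h2 | h2 <;>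
      simp [h1, h2, chi]

lemma zCoef_eq_chi (B : Finset V) (x : V → Fin 2) :
    ((-1 : ℂ) ^ (B.filter fun v => x v = 1).card) = chi (∑ v ∈ B, x v) := by
  rw [chi_sum]
  have : ∀ v, chi (x v) = if x v = 1 then (-1 : ℂ) else 1 := fun v => rfl
  simp only [this]
  rw [Finset.prod_ite, Finset.prod_const, Finset.prod_const_one, mul_one]

def indF (S : Finset V) : V → Fin 2 := fun v => if v ∈ S then 1 else 0

lemma flipS_eq (A : Finset V) (x : V → Fin 2) : flipS A x = x + indF A := by
  funext v
  by_cases h : v ∈ A <;> simp [flipS, indF, h]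

lemma sum_indF (s A : Finset V) : ∑ w ∈ s, indF A w = ((s ∩ A).card : Fin 2) := by
  rw [← Finset.filter_mem_eq_inter]
  rw [Finset.card_filter]
  push_cast
  rfl

lemma natCast_fin2_eq_one_iff (n : ℕ) : ((n : Fin 2) = 1) ↔ n % 2 = 1 := by
  rw [Fin.ext_iff, Fin.val_natCast, Fin.val_one]

/-- key single-flip lemma -/
lemma Qf_flip (G : SimpleGraph V) [DecidableRel G.Adj] (x : V → Fin 2) (v : V) :
    Qf G (x + indF {v}) + Qf G x = ∑ w ∈ G.neighborFinset v, x w := by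
  classical
  have hsplit : Qf G (x + indF {v}) + Qf G x
      = ∑ e ∈ G.edgeFinset,
        Sym2.lift ⟨fun i j => (if i = v then x j else 0) + (if j = v then x i else 0),
          fun i j => by ring⟩ e := by
    rw [Qf, Qf, ← Finset.sum_add_distrib]
    refine Finset.sum_congr rfl fun e he => ?_
    induction e using Sym2.ind with
    | _ i j =>
      have hij : i ≠ j :=
        G.ne_of_adj (G.mem_edgeSet.mp (SimpleGraph.mem_edgeFinset.mp he))
      simp only [Sym2.lift_mk, Pi.add_apply]
      by_cases hi : i = v
      · have hj : j ≠ v := fun h => hij (hi.trans h.symm)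
        subst hi
        simp only [indF, Finset.mem_singleton, if_pos rfl, if_neg hj]
        have : ∀ a b : Fin 2, (a + 1) * (b + 0) + a * b = b + 0 := by decide
        simpa using this (x i) (x j)
      · by_cases hj : j = v
        · subst hj
          simp only [indF, Finset.mem_singleton, if_pos rfl, if_neg hi]
          have : ∀ a b : Fin 2, (a + 0) * (b + 1) + a * b = 0 + a := by decide
          simpa using this (x i) (x j)
        · simp only [indF, Finset.mem_singleton, if_neg hi, if_neg hj]
          have : ∀ a b : Fin 2, (a + 0) * (b + 0) + a * b = 0 + 0 := by decide
          simpa using this (x i) (x j)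
  rw [hsplit]
  have himg : G.incidenceFinset v = (G.neighborFinset v).image (fun w => s(v, w)) := by
    ext e
    induction e using Sym2.ind with
    | _ i j =>
      simp only [SimpleGraph.mem_incidenceFinset, Finset.mem_image,
        SimpleGraph.mem_neighborFinset, SimpleGraph.mk'_mem_incidenceSet_iff]
      constructor
      · rintro ⟨hadj, rfl | rfl⟩
        · exact ⟨j, hadj, rfl⟩
        · exact ⟨i, hadj.symm, Sym2.eq_swap⟩
      · rintro ⟨w, hw, he⟩
        have := Sym2.eq_iff.mp he
        rcases this with ⟨rfl, rfl⟩ | ⟨rfl, rfl⟩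
        · exact ⟨hw, Or.inl rfl⟩
        · exact ⟨hw.symm, Or.inr rfl⟩
  have hfilter : ∀ e ∈ G.edgeFinset, e ∉ G.incidenceFinset v →
      Sym2.lift ⟨fun i j => (if i = v then x j else 0) + (if j = v then x i else 0),
        fun i j => by ring⟩ e = 0 := by
    intro e he hnot
    rw [SimpleGraph.mem_incidenceFinset] at hnot
    induction e using Sym2.ind with
    | _ i j =>
      have hi : i ≠ v := by
        rintro rfl
        exact hnot ⟨SimpleGraph.mem_edgeFinset.mp he, Sym2.mem_mk_left _ _⟩
      have hj : j ≠ v := by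
        rintro rfl
        exact hnot ⟨SimpleGraph.mem_edgeFinset.mp he, Sym2.mem_mk_right _ _⟩
      simp [Sym2.lift_mk, hi, hj]
  have hsub : G.incidenceFinset v ⊆ G.edgeFinset := by
    intro e he
    rw [SimpleGraph.mem_incidenceFinset] at he
    exact SimpleGraph.mem_edgeFinset.mpr he.1
  rw [← Finset.sum_subset hsub (fun e he hne => hfilter e he hne), himg,
    Finset.sum_image (fun a _ b _ h => (Sym2.congr_right).mp h)]
  refine Finset.sum_congr rfl fun w hw => ?_
  have hwv : w ≠ v := by
    rintro rfl
    exact G.irrefl ((SimpleGraph.mem_neighborFinset _ _ _).mp hw)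
  simp [Sym2.lift_mk, hwv]


def Tfun (G : SimpleGraph V) [DecidableRel G.Adj] (A B : Finset V) (x : V → Fin 2) : Fin 2 :=
  (∑ w ∈ B, flipS A x w) + Qf G (flipS A x) + Qf G x

lemma natCast_fin2_eq_zero_iff (n : ℕ) : ((n : Fin 2) = 0) ↔ n % 2 = 0 := by
  rw [Fin.ext_iff, Fin.val_natCast, Fin.val_zero]

lemma T_step (G : SimpleGraph V) [DecidableRel G.Adj] (A B : Finset V)
    (x : V → Fin 2) (v : V) :
    Tfun G A B (x + indF {v}) + Tfun G A B x
      = indF B v + ((G.neighborFinset v ∩ A).card : Fin 2) := by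
  have hflip : flipS A (x + indF {v}) = flipS A x + indF {v} := by
    rw [flipS_eq, flipS_eq, add_right_comm]
  have h1 : ∑ w ∈ B, (flipS A x + indF {v}) w = (∑ w ∈ B, flipS A x w) + indF B v := by
    simp only [Pi.add_apply, Finset.sum_add_distrib]
    congr 1
    simp only [indF, Finset.mem_singleton]
    exact Finset.sum_ite_eq' B v (fun _ => 1)
  have h2 := Qf_flip G (flipS A x) v
  have h3 := Qf_flip G x v
  have h4 : (∑ w ∈ G.neighborFinset v, flipS A x w) + (∑ w ∈ G.neighborFinset v, x w)
      = ((G.neighborFinset v ∩ A).card : Fin 2) := by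
    rw [← Finset.sum_add_distrib, ← sum_indF]
    refine Finset.sum_congr rfl fun w _ => ?_
    rw [flipS_eq]
    exact (by decide : ∀ a b : Fin 2, (a + b) + a = b) _ _
  unfold Tfun
  rw [hflip, h1]
  exact (by decide : ∀ S ib q1 q2 q3 q4 nf nx c : Fin 2,
    q1 + q3 = nf → q2 + q4 = nx → nf + nx = c →
    (S + ib + q1 + q2) + (S + q3 + q4) = ib + c) _ _ _ _ _ _ _ _ _ h2 h3 h4

lemma indF_empty : indF (∅ : Finset V) = 0 := by
  funext v; simp [indF]

lemma indF_insert (v : V) (S : Finset V) (h : v ∉ S) :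
    indF (insert v S) = indF S + indF {v} := by
  funext w
  by_cases hw : w = v
  · subst hw
    simp [indF, h]
  · simp [indF, hw, Finset.mem_insert]

lemma eq_indF (x : V → Fin 2) : x = indF (Finset.univ.filter fun v => x v = 1) := by
  funext v
  rcases fin2_cases (x v) with h | h <;> simp [indF, h]

lemma T_const (G : SimpleGraph V) [DecidableRel G.Adj] (A B : Finset V)
    (hB : B = oddNbhd G A) : ∀ x, Tfun G A B x = Tfun G A B 0 := by
  have hstep : ∀ x v, Tfun G A B (x + indF {v}) = Tfun G A B x := by
    intro x v
    have h := T_step G A B x v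
    have hz : indF B v + ((G.neighborFinset v ∩ A).card : Fin 2) = 0 := by
      by_cases hv : v ∈ B
      · have hm : (G.neighborFinset v ∩ A).card % 2 = 1 := by
          rw [hB, oddNbhd, Finset.mem_filter] at hv
          exact hv.2
        rw [(natCast_fin2_eq_one_iff _).mpr hm]
        simp [indF, hv]
      · have hm : (G.neighborFinset v ∩ A).card % 2 = 0 := by
          rw [hB, oddNbhd, Finset.mem_filter] at hv
          have h2 : ¬ (G.neighborFinset v ∩ A).card % 2 = 1 :=
            fun hh => hv ⟨Finset.mem_univ v, hh⟩
          omega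
        rw [(natCast_fin2_eq_zero_iff _).mpr hm]
        simp [indF, hv]
    rw [hz] at h
    exact (by decide : ∀ a b : Fin 2, a + b = 0 → a = b) _ _ h
  intro x
  rw [eq_indF x]
  generalize (Finset.univ.filter fun v => x v = 1) = S
  induction S using Finset.induction_on with
  | empty => rw [indF_empty]
  | insert v S hv ih =>
    rw [indF_insert v S hv, hstep, ih]

lemma T_const_imp (G : SimpleGraph V) [DecidableRel G.Adj] (A B : Finset V)
    (hT : ∀ x, Tfun G A B x = Tfun G A B 0) : B = oddNbhd G A := by
  ext v
  rw [oddNbhd, Finset.mem_filter]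
  have h := T_step G A B 0 v
  rw [zero_add, hT (indF {v})] at h
  rw [(by decide : ∀ a : Fin 2, a + a = 0) _] at h
  constructor
  · intro hv
    refine ⟨Finset.mem_univ v, ?_⟩
    rw [← natCast_fin2_eq_one_iff]
    have : indF B v = 1 := by simp [indF, hv]
    rw [this] at h
    exact (by decide : ∀ c : Fin 2, (0 : Fin 2) = 1 + c → c = 1) _ h
  · rintro ⟨-, hm⟩
    rw [(natCast_fin2_eq_one_iff _).mpr hm] at h
    by_contra hv
    have : indF B v = 0 := by simp [indF, hv]
    rw [this] at h
    exact absurd h (by decide)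

lemma key_pointwise (G : SimpleGraph V) [DecidableRel G.Adj] (A B : Finset V)
    (ε : ℂ) (x : V → Fin 2) :
    (xOp A (zOp B (egOp G plusState)) x = (ε • egOp G plusState) x)
      ↔ chi (Tfun G A B x) = ε := by
  have hc : (((Real.sqrt 2 : ℂ))⁻¹ ^ Fintype.card V) ≠ 0 := by
    apply pow_ne_zero
    exact inv_ne_zero (by exact_mod_cast Real.sqrt_ne_zero'.mpr (by norm_num))
  simp only [xOp, zOp, egOp, plusState, Pi.smul_apply, smul_eq_mul]
  rw [zCoef_eq_chi, egCoef_eq_chi, egCoef_eq_chi]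
  unfold Tfun
  rw [chi_add, chi_add]
  set s1 := chi (∑ v ∈ B, flipS A x v)
  set s2 := chi (Qf G (flipS A x))
  set s3 := chi (Qf G x)
  have h3 : s3 * s3 = 1 := chi_mul_self _
  constructor
  · intro h
    have h' : s1 * s2 = ε * s3 := by
      apply mul_right_cancel₀ hc
      rw [mul_assoc, mul_assoc]
      exact h
    calc s1 * s2 * s3 = ε * s3 * s3 := by rw [h']
      _ = ε * (s3 * s3) := by ring
      _ = ε := by rw [h3, mul_one]
  · intro h
    have h' : s1 * s2 = ε * s3 := by
      calc s1 * s2 = s1 * s2 * (s3 * s3) := by rw [h3, mul_one]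
        _ = (s1 * s2 * s3) * s3 := by ring
        _ = ε * s3 := by rw [h]
    rw [← mul_assoc, ← mul_assoc, h']


/-- A Pauli operator `P = ∏_{u ∈ A} X_u · ∏_{v ∈ B} Z_v` stabilizes the graph state
`|G⟩ = E_G |+⟩^{⊗V}` up to sign if and only if `B = Odd(A)`. -/
theorem pauli_stabilizes_graphState_iff (G : SimpleGraph V) [DecidableRel G.Adj]
    (A B : Finset V) :
    (∃ ε : ℂ, (ε = 1 ∨ ε = -1) ∧
      xOp A (zOp B (egOp G plusState)) = ε • egOp G plusState) ↔ B = oddNbhd G A := by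
  constructor
  · rintro ⟨ε, -, heq⟩
    refine T_const_imp G A B fun x => chi_inj ?_
    rw [(key_pointwise G A B ε x).mp (congrFun heq x),
      (key_pointwise G A B ε 0).mp (congrFun heq 0)]
  · intro hB
    refine ⟨chi (Tfun G A B 0), ?_, ?_⟩
    · rcases fin2_cases (Tfun G A B 0) with h | h <;> rw [h] <;> simp [chi]
    · funext x
      rw [key_pointwise, T_const G A B hB x]
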